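/- With the stiffness matrix entries z_{i,j} defined via the weighted left and right fractional integrals of the hat-function derivatives, the sub-diagonal entries satisfy, for every 2 ≤ i ≤ I−1, z_{i,i−1} = ( b · h^{λ−1} / Γ(λ+1) ) · ( 3·(3/2)^λ·γ − 3·(1/2)^λ·γ − (5/2)^λ·γ − 2^{−λ}·(1−γ) ). -/

import Mathlib

open MeasureTheory intervalIntegral Real

/-- Left fractional integral operator of order `lam` on `[0,1]`:
`(I_L^λ f)(x) = (1/Γ(λ)) ∫_0^x (x−s)^{λ−1} f(s) ds`. -/
noncomputable def leftFracInt (lam : ℝ) (f : ℝ → ℝ) (x : ℝ) : ℝ :=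
  (1 / Real.Gamma lam) * ∫ s in (0:ℝ)..x, (x - s) ^ (lam - 1) * f s

/-- Right fractional integral operator of order `lam` on `[0,1]`:
`(I_R^λ f)(x) = (1/Γ(λ)) ∫_x^1 (s−x)^{λ−1} f(s) ds`. -/
noncomputable def rightFracInt (lam : ℝ) (f : ℝ → ℝ) (x : ℝ) : ℝ :=
  (1 / Real.Gamma lam) * ∫ s in x..(1:ℝ), (s - x) ^ (lam - 1) * f s

/-- The a.e. derivative `Dφ_j` of the hat function `φ_j` on a uniform grid with
spacing `h`: it equals `1/h` on `(x_{j-1}, x_j)`, `−1/h` on `(x_j, x_{j+1})`,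
and `0` elsewhere, where `x_k = k·h`. -/
noncomputable def hatDeriv (h : ℝ) (j : ℕ) (s : ℝ) : ℝ :=
  if ((j : ℝ) - 1) * h < s ∧ s < (j : ℝ) * h then 1 / h
  else if (j : ℝ) * h < s ∧ s < ((j : ℝ) + 1) * h then -1 / h
  else 0

/-- The stiffness matrix entry
`z_{i,j} = b·[(γ I_L^λ + (1−γ) I_R^λ)(Dφ_j)(x_{i−1/2}) − (γ I_L^λ + (1−γ) I_R^λ)(Dφ_j)(x_{i+1/2})]`,
where `x_{i±1/2} = (i ± 1/2)·h` are the midpoints of the grid cells. -/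
noncomputable def stiff (lam gam b h : ℝ) (i j : ℕ) : ℝ :=
  b * ((gam * leftFracInt lam (hatDeriv h j) (((i : ℝ) - 1 / 2) * h)
          + (1 - gam) * rightFracInt lam (hatDeriv h j) (((i : ℝ) - 1 / 2) * h))
        - (gam * leftFracInt lam (hatDeriv h j) (((i : ℝ) + 1 / 2) * h)
          + (1 - gam) * rightFracInt lam (hatDeriv h j) (((i : ℝ) + 1 / 2) * h)))


lemma ae_uIoc_imp_Ioo (a b : ℝ) (hab : a ≤ b) :
    ∀ᵐ s : ℝ, s ∈ Set.uIoc a b → s ∈ Set.Ioo a b := by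
  have h0 : (volume ({b} : Set ℝ)) = 0 := measure_singleton b
  filter_upwards [measure_eq_zero_iff_ae_notMem.mp h0] with s hs hsu
  rw [Set.uIoc_of_le hab] at hsu
  exact ⟨hsu.1, lt_of_le_of_ne hsu.2 (by simpa using hs)⟩

lemma left_intble (lam x c : ℝ) (f : ℝ → ℝ) (a b : ℝ) (hlam : 0 < lam) (hab : a ≤ b)
    (hf : ∀ s ∈ Set.Ioo a b, f s = c) :
    IntervalIntegrable (fun s => (x - s) ^ (lam - 1) * f s) volume a b := by
  have base : IntervalIntegrable (fun s : ℝ => (x - s) ^ (lam - 1)) volume a b := by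
    simpa using ((intervalIntegrable_rpow' (a := x - b) (b := x - a) (r := lam - 1)
      (by linarith)).comp_sub_left x).symm
  apply (base.const_mul c).congr_ae
  rw [Filter.EventuallyEq, ae_restrict_iff' measurableSet_uIoc]
  filter_upwards [ae_uIoc_imp_Ioo a b hab] with s hs hsu
  rw [hf s (hs hsu)]; ring

lemma left_piece (lam x c : ℝ) (f : ℝ → ℝ) (a b : ℝ) (hlam : 0 < lam) (hab : a ≤ b)
    (hf : ∀ s ∈ Set.Ioo a b, f s = c) :
    ∫ s in a..b, (x - s) ^ (lam - 1) * f s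
      = c * (((x - a) ^ lam - (x - b) ^ lam) / lam) := by
  have key : (∫ s in a..b, (x - s) ^ (lam - 1) * f s)
      = ∫ s in a..b, c * (x - s) ^ (lam - 1) := by
    apply intervalIntegral.integral_congr_ae
    filter_upwards [ae_uIoc_imp_Ioo a b hab] with s hs hsu
    rw [hf s (hs hsu)]; ring
  rw [key, intervalIntegral.integral_const_mul]
  congr 1
  rw [intervalIntegral.integral_comp_sub_left (fun u : ℝ => u ^ (lam - 1)) x,
      integral_rpow (Or.inl (by linarith))]
  have hl : lam - 1 + 1 = lam := by ring
  rw [hl]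

lemma right_intble (lam x c : ℝ) (f : ℝ → ℝ) (a b : ℝ) (hlam : 0 < lam) (hab : a ≤ b)
    (hf : ∀ s ∈ Set.Ioo a b, f s = c) :
    IntervalIntegrable (fun s => (s - x) ^ (lam - 1) * f s) volume a b := by
  have base : IntervalIntegrable (fun s : ℝ => (s - x) ^ (lam - 1)) volume a b := by
    simpa using ((intervalIntegrable_rpow' (a := a - x) (b := b - x) (r := lam - 1)
      (by linarith)).comp_sub_right x)
  apply (base.const_mul c).congr_ae
  rw [Filter.EventuallyEq, ae_restrict_iff' measurableSet_uIoc]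
  filter_upwards [ae_uIoc_imp_Ioo a b hab] with s hs hsu
  rw [hf s (hs hsu)]; ring

lemma right_piece (lam x c : ℝ) (f : ℝ → ℝ) (a b : ℝ) (hlam : 0 < lam) (hab : a ≤ b)
    (hf : ∀ s ∈ Set.Ioo a b, f s = c) :
    ∫ s in a..b, (s - x) ^ (lam - 1) * f s
      = c * (((b - x) ^ lam - (a - x) ^ lam) / lam) := by
  have key : (∫ s in a..b, (s - x) ^ (lam - 1) * f s)
      = ∫ s in a..b, c * (s - x) ^ (lam - 1) := by
    apply intervalIntegral.integral_congr_ae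
    filter_upwards [ae_uIoc_imp_Ioo a b hab] with s hs hsu
    rw [hf s (hs hsu)]; ring
  rw [key, intervalIntegral.integral_const_mul]
  congr 1
  rw [intervalIntegral.integral_comp_sub_right (fun u : ℝ => u ^ (lam - 1)) x,
      integral_rpow (Or.inl (by linarith))]
  have hl : lam - 1 + 1 = lam := by ring
  rw [hl]
set_option maxHeartbeats 1000000 in
theorem stiffness_subdiagonal
    (lam gam b : ℝ) (hlam0 : 0 < lam) (hlam1 : lam < 1)
    (hgam : gam ∈ Set.Icc (0:ℝ) 1) (hb : 0 < b)
    (I : ℕ) (hI : 2 ≤ I) (h : ℝ) (hh : h = 1 / (I : ℝ))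
    (i : ℕ) (hi1 : 2 ≤ i) (hi2 : i ≤ I - 1) :
    stiff lam gam b h i (i - 1)
      = (b * h ^ (lam - 1) / Real.Gamma (lam + 1))
        * (3 * (3 / 2 : ℝ) ^ lam * gam - 3 * (1 / 2 : ℝ) ^ lam * gam
            - (5 / 2 : ℝ) ^ lam * gam - (2:ℝ) ^ (-lam) * (1 - gam)) := by
  have hI0 : (0:ℝ) < I := by
    have : (0:ℕ) < I := by omega
    exact_mod_cast this
  have hh0 : 0 < h := by rw [hh]; positivity
  set A : ℝ := (i : ℝ) with hA
  have hA2 : (2:ℝ) ≤ A := by rw [hA]; exact_mod_cast hi1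
  have hAI : A ≤ (I:ℝ) - 1 := by
    have h1 : ((i:ℕ):ℝ) ≤ ((I - 1 : ℕ):ℝ) := by exact_mod_cast hi2
    rwa [Nat.cast_sub (by omega), Nat.cast_one] at h1
  have hIh : (I:ℝ) * h = 1 := by rw [hh]; field_simp
  have hcast : ((i - 1 : ℕ) : ℝ) = A - 1 := by
    rw [Nat.cast_sub (by omega), Nat.cast_one]
  have hd : ∀ s : ℝ, hatDeriv h (i-1) s =
      if (A-2)*h < s ∧ s < (A-1)*h then 1/h
      else if (A-1)*h < s ∧ s < A*h then -1/h else 0 := by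
    intro s
    unfold hatDeriv
    rw [hcast, show (A - 1 - 1) = A - 2 from by ring, show (A - 1 + 1) = A from by ring]
  have hval1 : ∀ s ∈ Set.Ioo ((A-2)*h) ((A-1)*h), hatDeriv h (i-1) s = 1/h := by
    intro s hs; rw [hd, if_pos ⟨hs.1, hs.2⟩]
  have hval2 : ∀ s ∈ Set.Ioo ((A-1)*h) (A*h), hatDeriv h (i-1) s = -1/h := by
    intro s hs
    rw [hd, if_neg (by rintro ⟨_, hc⟩; exact absurd hs.1 (not_lt.2 hc.le)),
      if_pos ⟨hs.1, hs.2⟩]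
  have hval0low : ∀ s ∈ Set.Ioo (0:ℝ) ((A-2)*h), hatDeriv h (i-1) s = 0 := by
    intro s hs
    have h1 : (A-2)*h ≤ (A-1)*h := by nlinarith
    rw [hd, if_neg (by rintro ⟨hc, _⟩; linarith [hs.2]),
      if_neg (by rintro ⟨hc, _⟩; linarith [hs.2])]
  have hval0high : ∀ s : ℝ, A*h < s → hatDeriv h (i-1) s = 0 := by
    intro s hs
    have h1 : (A-2)*h ≤ A*h := by nlinarith
    have h2 : (A-1)*h ≤ A*h := by nlinarith
    rw [hd, if_neg (by rintro ⟨_, hc⟩; linarith),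
      if_neg (by rintro ⟨_, hc⟩; linarith)]
  have o1 : (0:ℝ) ≤ (A-2)*h := by nlinarith
  have o2 : (A-2)*h ≤ (A-1)*h := by nlinarith
  have o3 : (A-1)*h ≤ (A-1/2)*h := by nlinarith
  have o4 : (A-1/2)*h ≤ A*h := by nlinarith
  have o5 : A*h ≤ (A+1/2)*h := by nlinarith
  have o6 : (A+1/2)*h ≤ 1 := by
    nlinarith [mul_le_mul_of_nonneg_right (show A + 1/2 ≤ (I:ℝ) from by linarith) hh0.le]
  have oAh1 : A*h ≤ 1 := le_trans o5 o6
  -- left integral at x_{i-1/2}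
  have EL1 : (∫ s in (0:ℝ)..((A - 1/2)*h), ((A - 1/2)*h - s)^(lam-1) * hatDeriv h (i-1) s)
      = (1/h) * ((((3/2:ℝ)*h)^lam - ((1/2:ℝ)*h)^lam)/lam)
        + (-1/h) * ((((1/2:ℝ)*h)^lam - (0:ℝ)^lam)/lam) := by
    have i1 := left_intble lam ((A - 1/2)*h) 0 (hatDeriv h (i-1)) 0 ((A-2)*h) hlam0 o1 hval0low
    have i2 := left_intble lam ((A - 1/2)*h) (1/h) (hatDeriv h (i-1)) ((A-2)*h) ((A-1)*h) hlam0 o2 hval1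
    have i3 := left_intble lam ((A - 1/2)*h) (-1/h) (hatDeriv h (i-1)) ((A-1)*h) ((A-1/2)*h) hlam0 o3
      (fun s hs => hval2 s ⟨hs.1, lt_of_lt_of_le hs.2 o4⟩)
    rw [← intervalIntegral.integral_add_adjacent_intervals (i1.trans i2) i3,
        ← intervalIntegral.integral_add_adjacent_intervals i1 i2,
        left_piece lam ((A - 1/2)*h) 0 _ _ _ hlam0 o1 hval0low,
        left_piece lam ((A - 1/2)*h) (1/h) _ _ _ hlam0 o2 hval1,
        left_piece lam ((A - 1/2)*h) (-1/h) _ _ _ hlam0 o3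
          (fun s hs => hval2 s ⟨hs.1, lt_of_lt_of_le hs.2 o4⟩),
        show (A - 1/2)*h - (A-2)*h = (3/2:ℝ)*h from by ring,
        show (A - 1/2)*h - (A-1)*h = (1/2:ℝ)*h from by ring,
        show (A - 1/2)*h - (A - 1/2)*h = (0:ℝ) from by ring]
    ring
  -- left integral at x_{i+1/2}
  have EL2 : (∫ s in (0:ℝ)..((A + 1/2)*h), ((A + 1/2)*h - s)^(lam-1) * hatDeriv h (i-1) s)
      = (1/h) * ((((5/2:ℝ)*h)^lam - ((3/2:ℝ)*h)^lam)/lam)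
        + (-1/h) * ((((3/2:ℝ)*h)^lam - ((1/2:ℝ)*h)^lam)/lam) := by
    have i1 := left_intble lam ((A + 1/2)*h) 0 (hatDeriv h (i-1)) 0 ((A-2)*h) hlam0 o1 hval0low
    have i2 := left_intble lam ((A + 1/2)*h) (1/h) (hatDeriv h (i-1)) ((A-2)*h) ((A-1)*h) hlam0 o2 hval1
    have i3 := left_intble lam ((A + 1/2)*h) (-1/h) (hatDeriv h (i-1)) ((A-1)*h) (A*h) hlam0 (le_trans o3 o4) hval2
    have i4 := left_intble lam ((A + 1/2)*h) 0 (hatDeriv h (i-1)) (A*h) ((A+1/2)*h) hlam0 o5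
      (fun s hs => hval0high s hs.1)
    rw [← intervalIntegral.integral_add_adjacent_intervals ((i1.trans i2).trans i3) i4,
        ← intervalIntegral.integral_add_adjacent_intervals (i1.trans i2) i3,
        ← intervalIntegral.integral_add_adjacent_intervals i1 i2,
        left_piece lam ((A + 1/2)*h) 0 _ _ _ hlam0 o1 hval0low,
        left_piece lam ((A + 1/2)*h) (1/h) _ _ _ hlam0 o2 hval1,
        left_piece lam ((A + 1/2)*h) (-1/h) _ _ _ hlam0 (le_trans o3 o4) hval2,
        left_piece lam ((A + 1/2)*h) 0 _ _ _ hlam0 o5 (fun s hs => hval0high s hs.1),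
        show (A + 1/2)*h - (A-2)*h = (5/2:ℝ)*h from by ring,
        show (A + 1/2)*h - (A-1)*h = (3/2:ℝ)*h from by ring,
        show (A + 1/2)*h - A*h = (1/2:ℝ)*h from by ring]
    ring
  -- right integral at x_{i-1/2}
  have ER1 : (∫ s in ((A - 1/2)*h)..(1:ℝ), (s - (A - 1/2)*h)^(lam-1) * hatDeriv h (i-1) s)
      = (-1/h) * ((((1/2:ℝ)*h)^lam - (0:ℝ)^lam)/lam) := by
    have j1 := right_intble lam ((A - 1/2)*h) (-1/h) (hatDeriv h (i-1)) ((A-1/2)*h) (A*h) hlam0 o4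
      (fun s hs => hval2 s ⟨lt_of_le_of_lt o3 hs.1, hs.2⟩)
    have j2 := right_intble lam ((A - 1/2)*h) 0 (hatDeriv h (i-1)) (A*h) 1 hlam0 oAh1
      (fun s hs => hval0high s hs.1)
    rw [← intervalIntegral.integral_add_adjacent_intervals j1 j2,
        right_piece lam ((A - 1/2)*h) (-1/h) _ _ _ hlam0 o4
          (fun s hs => hval2 s ⟨lt_of_le_of_lt o3 hs.1, hs.2⟩),
        right_piece lam ((A - 1/2)*h) 0 _ _ _ hlam0 oAh1 (fun s hs => hval0high s hs.1),
        show A*h - (A - 1/2)*h = (1/2:ℝ)*h from by ring,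
        show (A - 1/2)*h - (A - 1/2)*h = (0:ℝ) from by ring]
    ring
  -- right integral at x_{i+1/2}
  have ER2 : (∫ s in ((A + 1/2)*h)..(1:ℝ), (s - (A + 1/2)*h)^(lam-1) * hatDeriv h (i-1) s)
      = 0 := by
    rw [right_piece lam ((A + 1/2)*h) 0 _ _ _ hlam0 o6
      (fun s hs => hval0high s (lt_of_le_of_lt o5 hs.1))]
    ring
  have r3 : ((3/2:ℝ)*h)^lam = (3/2:ℝ)^lam * h^lam := Real.mul_rpow (by norm_num) hh0.le
  have r1 : ((1/2:ℝ)*h)^lam = (1/2:ℝ)^lam * h^lam := Real.mul_rpow (by norm_num) hh0.le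
  have r5 : ((5/2:ℝ)*h)^lam = (5/2:ℝ)^lam * h^lam := Real.mul_rpow (by norm_num) hh0.le
  have r0 : (0:ℝ)^lam = 0 := Real.zero_rpow (ne_of_gt hlam0)
  have rh : h^(lam-1) = h^lam / h := Real.rpow_sub_one (ne_of_gt hh0) lam
  have rG : Real.Gamma (lam+1) = lam * Real.Gamma lam := Real.Gamma_add_one (ne_of_gt hlam0)
  have r2 : (2:ℝ)^(-lam) = (1/2:ℝ)^lam := by
    rw [Real.rpow_neg (by norm_num : (0:ℝ) ≤ 2), ← Real.inv_rpow (by norm_num : (0:ℝ) ≤ 2)]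
    norm_num
  have hG : 0 < Real.Gamma lam := Real.Gamma_pos_of_pos hlam0
  unfold stiff leftFracInt rightFracInt
  rw [← hA, EL1, EL2, ER1, ER2, r3, r1, r5, r0, rh, rG, r2]
  field_simp
  ring
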